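/- For any completion-minimal insertion node u of the cotree T, there is exactly one inclusion-minimal constrained cograph completion of G+x whose associated insertion node is u, namely the completion anchored at u. -/

import Mathlib

universe u

def IsCograph {α : Type*} (G : SimpleGraph α) : Prop :=
  ¬ ∃ f : Fin 4 → α, Function.Injective f ∧
      ∀ i j : Fin 4, G.Adj (f i) (f j) ↔ (i.val + 1 = j.val ∨ j.val + 1 = i.val)

inductive Cotree (V : Type u) : Type u where
  | leaf : V → Cotree V
  | node : Bool → List (Cotree V) → Cotree V

namespace Cotree

variable {V : Type u}

def leaves : Cotree V → List V
  | .leaf v => [v]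
  | .node _ ts => ts.attach.flatMap (fun t => t.1.leaves)

decreasing_by simp_wf; have := List.sizeOf_lt_of_mem t.2; omega

def subtrees : Cotree V → List (Cotree V)
  | .leaf v => [.leaf v]
  | .node b ts => .node b ts :: ts.attach.flatMap (fun t => t.1.subtrees)

decreasing_by simp_wf; have := List.sizeOf_lt_of_mem t.2; omega

def children : Cotree V → List (Cotree V)
  | .leaf _ => []
  | .node _ ts => ts

def isSeries : Cotree V → Prop
  | .node true _ => True
  | _ => False

def isParallel : Cotree V → Prop
  | .node false _ => True
  | _ => False

def adj : Cotree V → V → V → Prop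
  | .leaf _, _, _ => False
  | .node b ts, x, y =>
      (∃ t ∈ ts.attach, adj t.1 x y) ∨
      (b = true ∧ ∃ t ∈ ts.attach, ∃ s ∈ ts.attach,
        t.1 ≠ s.1 ∧ x ∈ t.1.leaves ∧ y ∈ s.1.leaves)

decreasing_by simp_wf; have := List.sizeOf_lt_of_mem t.2; omega

def valid : Cotree V → Prop
  | .leaf _ => True
  | .node b ts => 2 ≤ ts.length ∧ ∀ t ∈ ts.attach, valid t.1 ∧
      ∀ b' ts', t.1 = .node b' ts' → b' ≠ b

decreasing_by simp_wf; have := List.sizeOf_lt_of_mem t.2; omega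

def hollow (N : Set V) (t : Cotree V) : Prop := ∀ v ∈ t.leaves, v ∉ N
def full (N : Set V) (t : Cotree V) : Prop := ∀ v ∈ t.leaves, v ∈ N
def uniform (N : Set V) (t : Cotree V) : Prop := full N t ∨ hollow N t
def mixed (N : Set V) (t : Cotree V) : Prop := ¬ uniform N t

def forced (N : Set V) : Cotree V → Prop
  | .leaf v => v ∈ N
  | .node b ts =>
      full N (.node b ts) ∨
      (b = false ∧ ∀ t ∈ ts, ¬ hollow N t) ∨
      (b = true ∧ ∀ t ∈ ts.attach, forced N t.1)

decreasing_by simp_wf; have := List.sizeOf_lt_of_mem t.2; omega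

def eligible (N : Set V) : Cotree V → Cotree V → Prop
  | .leaf v, u => u = .leaf v
  | .node b ts, u => u = .node b ts ∨
      ∃ t ∈ ts.attach, eligible N t.1 u ∧
        (b = false → ∀ s ∈ ts, s ≠ t.1 → hollow N s)

decreasing_by simp_wf; have := List.sizeOf_lt_of_mem t.2; omega

def IsLcaLeaves (T u : Cotree V) (x y : V) : Prop :=
  u ∈ T.subtrees ∧ x ∈ u.leaves ∧ y ∈ u.leaves ∧
    ∀ c ∈ u.children, ¬ (x ∈ c.leaves ∧ y ∈ c.leaves)

def IsLcaNodeLeaf (T w u : Cotree V) (y : V) : Prop :=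
  w ∈ T.subtrees ∧ u ∈ w.subtrees ∧ y ∈ w.leaves ∧
    ∀ c ∈ w.children, ¬ (u ∈ c.subtrees ∧ y ∈ c.leaves)

def graphOf (T : Cotree V) : SimpleGraph V :=
  SimpleGraph.fromRel (fun a b => T.adj a b)

def graphPlus (T : Cotree V) (N : Set V) : SimpleGraph (Option V) :=
  SimpleGraph.fromRel (fun a b =>
    match a, b with
    | some u, some v => T.adj u v
    | none, some v => v ∈ N
    | _, _ => False)

def IsConstrainedCompletion (T : Cotree V) (Nx N' : Set V) : Prop :=
  Nx ⊆ N' ∧ (∀ v ∈ N', v ∈ T.leaves) ∧ IsCograph (graphPlus T N')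

def IsMinimalConstrainedCompletion (T : Cotree V) (Nx N' : Set V) : Prop :=
  IsConstrainedCompletion T Nx N' ∧
    ∀ N'' ⊆ N', IsConstrainedCompletion T Nx N'' → N'' = N'

def IsInsertionNode (T : Cotree V) (N' : Set V) (u : Cotree V) : Prop :=
  u ∈ T.subtrees ∧ mixed N' u ∧ (∀ c ∈ u.children, uniform N' c) ∧
    ∀ y ∈ T.leaves, y ∉ u.leaves →
      (y ∈ N' ↔ ∃ w, IsLcaNodeLeaf T w u y ∧ w.isSeries)

def IsCMInsertionNode (T : Cotree V) (Nx : Set V) (u : Cotree V) : Prop :=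
  ∃ N', IsMinimalConstrainedCompletion T Nx N' ∧ IsInsertionNode T N' u

def anchored (T u : Cotree V) (Nx : Set V) : Set V :=
  Nx ∪ {y | y ∈ T.leaves ∧ y ∉ u.leaves ∧ ∃ w, IsLcaNodeLeaf T w u y ∧ w.isSeries}
     ∪ {y | ∃ c ∈ u.children, ¬ hollow Nx c ∧ y ∈ c.leaves}

end Cotree
namespace Cotree

variable {V : Type u}

theorem ind {P : Cotree V → Prop} (h1 : ∀ v, P (.leaf v))
    (h2 : ∀ b ts, (∀ t ∈ ts, P t) → P (.node b ts)) : ∀ t, P t := by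
  have key : ∀ n (t : Cotree V), sizeOf t ≤ n → P t := by
    intro n
    induction n with
    | zero => intro t ht; cases t <;> simp at ht
    | succ n ih =>
      intro t ht
      cases t with
      | leaf v => exact h1 v
      | node b ts =>
        refine h2 b ts (fun s hs => ih s ?_)
        have := List.sizeOf_lt_of_mem hs
        simp at ht; omega
  exact fun t => key (sizeOf t) t le_rfl

@[simp] lemma leaves_leaf (v : V) : (leaf v).leaves = [v] := by rw [leaves]

@[simp] lemma leaves_node (b : Bool) (ts : List (Cotree V)) :
    (node b ts).leaves = ts.flatMap leaves := by rw [leaves]; simp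

@[simp] lemma subtrees_leaf (v : V) : (leaf v).subtrees = [leaf v] := by rw [subtrees]

@[simp] lemma subtrees_node (b : Bool) (ts : List (Cotree V)) :
    (node b ts).subtrees = node b ts :: ts.flatMap subtrees := by rw [subtrees]; simp

@[simp] lemma children_node (b : Bool) (ts : List (Cotree V)) :
    (node b ts).children = ts := rfl

@[simp] lemma adj_leaf (v x y : V) : ¬ (leaf v).adj x y := by rw [adj]; exact id

lemma adj_node (b : Bool) (ts : List (Cotree V)) (x y : V) :
    (node b ts).adj x y ↔ (∃ t ∈ ts, t.adj x y) ∨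
      (b = true ∧ ∃ t ∈ ts, ∃ s ∈ ts, t ≠ s ∧ x ∈ t.leaves ∧ y ∈ s.leaves) := by
  rw [adj]
  constructor
  · rintro (⟨⟨t, ht⟩, -, h⟩ | ⟨hb, ⟨t, ht⟩, -, ⟨s, hs⟩, -, h⟩)
    · exact Or.inl ⟨t, ht, h⟩
    · exact Or.inr ⟨hb, t, ht, s, hs, h⟩
  · rintro (⟨t, ht, h⟩ | ⟨hb, t, ht, s, hs, h⟩)
    · exact Or.inl ⟨⟨t, ht⟩, List.mem_attach _ _, h⟩
    · exact Or.inr ⟨hb, ⟨t, ht⟩, List.mem_attach _ _, ⟨s, hs⟩, List.mem_attach _ _, h⟩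

lemma valid_node (b : Bool) (ts : List (Cotree V)) :
    (node b ts).valid ↔ 2 ≤ ts.length ∧ ∀ t ∈ ts, t.valid ∧
      ∀ b' ts', t = .node b' ts' → b' ≠ b := by
  rw [valid]
  constructor
  · rintro ⟨hl, h⟩
    exact ⟨hl, fun t ht => h ⟨t, ht⟩ (List.mem_attach _ _)⟩
  · rintro ⟨hl, h⟩
    exact ⟨hl, fun t _ => h t.1 t.2⟩

lemma mem_leaves_node {v : V} {b : Bool} {ts : List (Cotree V)} :
    v ∈ (node b ts).leaves ↔ ∃ t ∈ ts, v ∈ t.leaves := by simp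

lemma mem_subtrees_node {s : Cotree V} {b : Bool} {ts : List (Cotree V)} :
    s ∈ (node b ts).subtrees ↔ s = node b ts ∨ ∃ t ∈ ts, s ∈ t.subtrees := by simp

lemma self_mem_subtrees (t : Cotree V) : t ∈ t.subtrees := by
  cases t <;> simp

lemma subtrees_trans {t s w : Cotree V} (hs : s ∈ t.subtrees) (hw : w ∈ s.subtrees) :
    w ∈ t.subtrees := by
  induction t using Cotree.ind generalizing s w with
  | h1 v => simp_all
  | h2 b ts ih =>
    rcases mem_subtrees_node.1 hs with rfl | ⟨t', ht', hs'⟩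
    · exact hw
    · exact mem_subtrees_node.2 (Or.inr ⟨t', ht', ih t' ht' hs' hw⟩)

lemma leaves_subset_of_mem_subtrees {t u : Cotree V} (hu : u ∈ t.subtrees) :
    ∀ v ∈ u.leaves, v ∈ t.leaves := by
  induction t using Cotree.ind generalizing u with
  | h1 v => simp_all
  | h2 b ts ih =>
    rcases mem_subtrees_node.1 hu with rfl | ⟨t', ht', hu'⟩
    · exact fun v hv => hv
    · exact fun v hv => mem_leaves_node.2 ⟨t', ht', ih t' ht' hu' v hv⟩

lemma valid_of_mem_subtrees {t u : Cotree V} (hval : t.valid) (hu : u ∈ t.subtrees) :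
    u.valid := by
  induction t using Cotree.ind generalizing u with
  | h1 v => simp_all
  | h2 b ts ih =>
    rcases mem_subtrees_node.1 hu with rfl | ⟨t', ht', hu'⟩
    · exact hval
    · exact ih t' ht' (((valid_node b ts).1 hval).2 t' ht').1 hu'

lemma leaves_ne_nil {t : Cotree V} (hval : t.valid) : ∃ v, v ∈ t.leaves := by
  induction t using Cotree.ind with
  | h1 v => exact ⟨v, by simp⟩
  | h2 b ts ih =>
    obtain ⟨hl, h⟩ := (valid_node b ts).1 hval
    obtain ⟨t, ht⟩ : ∃ t, t ∈ ts := by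
      cases ts with
      | nil => simp at hl
      | cons a l => exact ⟨a, by simp⟩
    obtain ⟨v, hv⟩ := ih t ht (h t ht).1
    exact ⟨v, mem_leaves_node.2 ⟨t, ht, hv⟩⟩

lemma nodup_leaves_of_mem_subtrees {t u : Cotree V} (hnd : t.leaves.Nodup)
    (hu : u ∈ t.subtrees) : u.leaves.Nodup := by
  induction t using Cotree.ind generalizing u with
  | h1 v => simp_all
  | h2 b ts ih =>
    rcases mem_subtrees_node.1 hu with rfl | ⟨t', ht', hu'⟩
    · exact hnd
    · refine ih t' ht' ?_ hu'
      rw [leaves_node, List.nodup_flatMap] at hnd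
      exact hnd.1 t' ht'

lemma sibling_eq {b : Bool} {ts : List (Cotree V)} (hnd : (node b ts).leaves.Nodup)
    {t₁ t₂ : Cotree V} (h1 : t₁ ∈ ts) (h2 : t₂ ∈ ts) {v : V}
    (hv1 : v ∈ t₁.leaves) (hv2 : v ∈ t₂.leaves) : t₁ = t₂ := by
  rw [leaves_node, List.nodup_flatMap] at hnd
  by_contra hne
  have : Std.Symm (Function.onFun List.Disjoint (leaves (V := V))) := ⟨fun a b h => h.symm⟩
  exact (hnd.2.forall h1 h2 hne) hv1 hv2

lemma mem_leaves_of_adj {t : Cotree V} {x y : V} (h : t.adj x y) :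
    x ∈ t.leaves ∧ y ∈ t.leaves := by
  induction t using Cotree.ind with
  | h1 v => simp_all
  | h2 b ts ih =>
    rcases (adj_node b ts x y).1 h with ⟨t', ht', h'⟩ | ⟨-, t', ht', s', hs', -, hx, hy⟩
    · obtain ⟨hx, hy⟩ := ih t' ht' h'
      exact ⟨mem_leaves_node.2 ⟨t', ht', hx⟩, mem_leaves_node.2 ⟨t', ht', hy⟩⟩
    · exact ⟨mem_leaves_node.2 ⟨t', ht', hx⟩, mem_leaves_node.2 ⟨s', hs', hy⟩⟩

lemma adj_symm {t : Cotree V} {x y : V} (h : t.adj x y) : t.adj y x := by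
  induction t using Cotree.ind with
  | h1 v => simp_all
  | h2 b ts ih =>
    rcases (adj_node b ts x y).1 h with ⟨t', ht', h'⟩ | ⟨hb, t', ht', s', hs', hne, hx, hy⟩
    · exact (adj_node b ts y x).2 (Or.inl ⟨t', ht', ih t' ht' h'⟩)
    · exact (adj_node b ts y x).2 (Or.inr ⟨hb, s', hs', t', ht', Ne.symm hne, hy, hx⟩)

lemma subtree_child_unique {b : Bool} {ts : List (Cotree V)}
    (hval : (node b ts).valid) (hnd : (node b ts).leaves.Nodup)
    {u s₁ s₂ : Cotree V} (h1 : s₁ ∈ ts) (h2 : s₂ ∈ ts)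
    (hu1 : u ∈ s₁.subtrees) (hu2 : u ∈ s₂.subtrees) : s₁ = s₂ := by
  have huval : u.valid := valid_of_mem_subtrees hval
      (mem_subtrees_node.2 (Or.inr ⟨s₁, h1, hu1⟩))
  obtain ⟨v, hv⟩ := leaves_ne_nil huval
  exact sibling_eq hnd h1 h2 (leaves_subset_of_mem_subtrees hu1 v hv)
    (leaves_subset_of_mem_subtrees hu2 v hv)

end Cotree
namespace Cotree

variable {V : Type u}

lemma adj_restrict {t u : Cotree V} (hnd : t.leaves.Nodup) (hu : u ∈ t.subtrees)
    {x y : V} (hx : x ∈ u.leaves) (hy : y ∈ u.leaves) : t.adj x y ↔ u.adj x y := by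
  induction t using Cotree.ind generalizing u with
  | h1 v =>
    simp only [subtrees_leaf, List.mem_singleton] at hu
    subst hu; rfl
  | h2 b ts ih =>
    rcases mem_subtrees_node.1 hu with rfl | ⟨s, hs, hu'⟩
    · rfl
    · have hxs : x ∈ s.leaves := leaves_subset_of_mem_subtrees hu' x hx
      have hys : y ∈ s.leaves := leaves_subset_of_mem_subtrees hu' y hy
      have hnds : s.leaves.Nodup := nodup_leaves_of_mem_subtrees hnd
        (mem_subtrees_node.2 (Or.inr ⟨s, hs, self_mem_subtrees s⟩))
      rw [adj_node]
      constructor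
      · rintro (⟨t', ht', h'⟩ | ⟨-, t', ht', s', hs', hne, hx', hy'⟩)
        · obtain ⟨hx', hy'⟩ := mem_leaves_of_adj h'
          have : t' = s := sibling_eq hnd ht' hs hx' hxs
          subst this
          exact (ih t' ht' hnds hu' hx hy).1 h'
        · exact absurd ((sibling_eq hnd ht' hs hx' hxs).trans
            (sibling_eq hnd hs' hs hy' hys).symm) hne
      · intro h
        exact Or.inl ⟨s, hs, (ih s hs hnds hu' hx hy).2 h⟩

lemma adj_cross {b : Bool} {ts : List (Cotree V)} (hnd : (node b ts).leaves.Nodup)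
    {c₁ c₂ : Cotree V} (h1 : c₁ ∈ ts) (h2 : c₂ ∈ ts) (hne : c₁ ≠ c₂)
    {x y : V} (hx : x ∈ c₁.leaves) (hy : y ∈ c₂.leaves) :
    ((node b ts).adj x y ↔ b = true) := by
  rw [adj_node]
  constructor
  · rintro (⟨t', ht', h'⟩ | ⟨hb, -⟩)
    · obtain ⟨hx', hy'⟩ := mem_leaves_of_adj h'
      exact absurd ((sibling_eq hnd ht' h1 hx' hx).symm.trans (sibling_eq hnd ht' h2 hy' hy))
        hne
    · exact hb
  · intro hb
    exact Or.inr ⟨hb, c₁, h1, c₂, h2, hne, hx, hy⟩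

lemma isSeries_node {b : Bool} {ts : List (Cotree V)} :
    (node b ts).isSeries ↔ b = true := by
  cases b <;> simp [isSeries]

/-- Localization of the lca-of-node-and-leaf to a child subtree. -/
lemma lca_localize {b : Bool} {ts : List (Cotree V)}
    (hval : (node b ts).valid) (hnd : (node b ts).leaves.Nodup)
    {s u : Cotree V} (hs : s ∈ ts) (hu : u ∈ s.subtrees)
    {z : V} (hz : z ∈ s.leaves) (w : Cotree V) :
    IsLcaNodeLeaf (node b ts) w u z ↔ IsLcaNodeLeaf s w u z := by
  constructor
  · rintro ⟨hwT, huw, hzw, hch⟩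
    rcases mem_subtrees_node.1 hwT with rfl | ⟨s', hs', hw'⟩
    · exact absurd ⟨hu, hz⟩ (hch s hs)
    · have : s' = s := subtree_child_unique hval hnd hs' hs (subtrees_trans hw' huw) hu
      subst this
      exact ⟨hw', huw, hzw, hch⟩
  · rintro ⟨hws, huw, hzw, hch⟩
    exact ⟨mem_subtrees_node.2 (Or.inr ⟨s, hs, hws⟩), huw, hzw, hch⟩

/-- Adjacency to a leaf outside `u` is determined by the lca of `u` and that leaf. -/
lemma adj_iff_lca_series {T u : Cotree V} (hval : T.valid) (hnd : T.leaves.Nodup)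
    (hu : u ∈ T.subtrees) {y z : V} (hy : y ∈ u.leaves) (hz : z ∈ T.leaves)
    (hzu : z ∉ u.leaves) :
    (T.adj y z ↔ ∃ w, IsLcaNodeLeaf T w u z ∧ w.isSeries) := by
  induction T using Cotree.ind generalizing u with
  | h1 v =>
    simp only [subtrees_leaf, List.mem_singleton] at hu
    subst hu
    exact absurd hz hzu
  | h2 b ts ih =>
    rcases mem_subtrees_node.1 hu with rfl | ⟨s, hs, hu'⟩
    · exact absurd hz hzu
    · have hys : y ∈ s.leaves := leaves_subset_of_mem_subtrees hu' y hy
      have hnds : s.leaves.Nodup := nodup_leaves_of_mem_subtrees hnd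
        (mem_subtrees_node.2 (Or.inr ⟨s, hs, self_mem_subtrees s⟩))
      have hvals : s.valid := valid_of_mem_subtrees hval
        (mem_subtrees_node.2 (Or.inr ⟨s, hs, self_mem_subtrees s⟩))
      by_cases hzs : z ∈ s.leaves
      · -- both inside s : localize
        have h1 : (node b ts).adj y z ↔ s.adj y z := by
          rw [adj_node]
          constructor
          · rintro (⟨t', ht', h'⟩ | ⟨-, t', ht', s', hs', hne, hy', hz'⟩)
            · obtain ⟨hy', hz'⟩ := mem_leaves_of_adj h'
              have : t' = s := sibling_eq hnd ht' hs hy' hys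
              exact this ▸ h'
            · exact absurd ((sibling_eq hnd ht' hs hy' hys).trans
                (sibling_eq hnd hs' hs hz' hzs).symm) hne
          · intro h; exact Or.inl ⟨s, hs, h⟩
        rw [h1, ih s hs hvals hnds hu' hy hzs hzu]
        exact exists_congr fun w =>
          and_congr_left fun _ => (lca_localize hval hnd hs hu' hzs w).symm
      · -- z in another child
        obtain ⟨s₂, hs₂, hzs₂⟩ := mem_leaves_node.1 hz
        have hss₂ : s ≠ s₂ := fun h => hzs (h ▸ hzs₂)
        rw [adj_cross hnd hs hs₂ hss₂ hys hzs₂]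
        constructor
        · intro hb
          refine ⟨node b ts, ⟨self_mem_subtrees _, hu, hz, ?_⟩, ?_⟩
          · rintro c hc ⟨huc, hzc⟩
            have : c = s := subtree_child_unique hval hnd hc hs huc hu'
            exact hzs (this ▸ hzc)
          · rw [isSeries_node]; exact hb
        · rintro ⟨w, ⟨hwT, huw, hzw, hch⟩, hser⟩
          have hwtop : w = node b ts := by
            rcases mem_subtrees_node.1 hwT with h | ⟨s', hs', hw'⟩
            · exact h
            · exfalso
              have : s' = s := subtree_child_unique hval hnd hs' hs
                (subtrees_trans hw' huw) hu'
              subst this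
              exact hzs (leaves_subset_of_mem_subtrees hw' z hzw)
          subst hwtop
          exact isSeries_node.1 hser

end Cotree
namespace Cotree

variable {V : Type u}

/-- consecutive relation on `Fin 4` -/
private def Csc (i j : Fin 4) : Prop := i.val + 1 = j.val ∨ j.val + 1 = i.val

private instance (i j : Fin 4) : Decidable (Csc i j) := by
  unfold Csc; infer_instance

private lemma csc_symm {i j : Fin 4} : Csc i j ↔ Csc j i := by unfold Csc; omega

private lemma mini1 : ∀ p q : Fin 4, p ≠ q →
    ∃ o, o ≠ p ∧ o ≠ q ∧ ¬(Csc o p ↔ Csc o q) := by decide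

private lemma mini2 : ∀ o : Fin 4,
    (∃ j, j ≠ o ∧ Csc o j) ∧ (∃ j, j ≠ o ∧ ¬Csc o j) := by decide

private lemma mini3 : ∀ p : Fin 4, ∃ i j, i ≠ p ∧ j ≠ p ∧ i ≠ j ∧
    Csc p i ∧ ¬Csc p j ∧ ¬Csc i j := by decide

private lemma mini4 : ∀ p : Fin 4, ∃ i j, i ≠ p ∧ j ≠ p ∧ i ≠ j ∧
    Csc p i ∧ ¬Csc p j ∧ Csc i j := by decide

private lemma mini5 : ∀ o p q r x : Fin 4, o ≠ p → o ≠ q → o ≠ r → p ≠ q → p ≠ r →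
    q ≠ r → (x = o ∨ x = p ∨ x = q ∨ x = r) := by decide

/-- The abstract combinatorial core: no `P4` can contain the new vertex `p` together
with at least one vertex inside the insertion node. -/
private lemma fin4_aux {β : Type u} (p : Fin 4) (cl : Fin 4 → Option β)
    (A : Fin 4 → Prop) (F : β → Prop) (σ : Prop)
    (h1 : ∀ i, i ≠ p → cl i = none → (Csc p i ↔ A i))
    (h2 : ∀ i j b, i ≠ p → j ≠ p → i ≠ j → cl i = some b → cl j = none → (Csc i j ↔ A j))
    (h3 : ∀ i b, i ≠ p → cl i = some b → (Csc p i ↔ F b))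
    (h4 : ∀ i j bi bj, i ≠ p → j ≠ p → i ≠ j → cl i = some bi → cl j = some bj →
      bi ≠ bj → (Csc i j ↔ σ))
    (h5 : ∃ i b, i ≠ p ∧ cl i = some b) : False := by
  classical
  obtain ⟨q, bq, hqp, hq⟩ := h5
  by_cases hall : ∀ i, i ≠ p → cl i ≠ none
  · -- all three non-p indices are "inside"
    by_cases hσ : σ
    · obtain ⟨i, j, hip, hjp, hij, hpi, hpj, hcij⟩ := mini3 p
      obtain ⟨bi, hbi⟩ : ∃ b, cl i = some b := Option.ne_none_iff_exists'.1 (hall i hip)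
      obtain ⟨bj, hbj⟩ : ∃ b, cl j = some b := Option.ne_none_iff_exists'.1 (hall j hjp)
      by_cases hbij : bi = bj
      · exact hpj (((h3 j bj hjp hbj).2 (hbij ▸ (h3 i bi hip hbi).1 hpi)))
      · exact hcij ((h4 i j bi bj hip hjp hij hbi hbj hbij).2 hσ)
    · obtain ⟨i, j, hip, hjp, hij, hpi, hpj, hcij⟩ := mini4 p
      obtain ⟨bi, hbi⟩ : ∃ b, cl i = some b := Option.ne_none_iff_exists'.1 (hall i hip)
      obtain ⟨bj, hbj⟩ : ∃ b, cl j = some b := Option.ne_none_iff_exists'.1 (hall j hjp)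
      by_cases hbij : bi = bj
      · exact hpj (((h3 j bj hjp hbj).2 (hbij ▸ (h3 i bi hip hbi).1 hpi)))
      · exact hσ ((h4 i j bi bj hip hjp hij hbi hbj hbij).1 hcij)
  · push_neg at hall
    obtain ⟨o, hop, ho⟩ := hall
    have hoq : o ≠ q := fun h => by rw [h, hq] at ho; exact absurd ho (by simp)
    by_cases hone : ∀ i, i ≠ p → i ≠ q → cl i = none
    · -- q is the only inside vertex
      obtain ⟨o', ho'p, ho'q, hiff⟩ := mini1 p q hqp.symm
      have hno' : cl o' = none := hone o' ho'p ho'q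
      have e1 : Csc o' p ↔ A o' := csc_symm.trans (h1 o' ho'p hno')
      have e2 : Csc o' q ↔ A o' := csc_symm.trans (h2 q o' bq hqp ho'p
        (fun h => ho'q h.symm) hq hno')
      exact hiff (e1.trans e2.symm)
    · push_neg at hone
      obtain ⟨r, hrp, hrq, hr⟩ := hone
      obtain ⟨br, hbr⟩ : ∃ b, cl r = some b := Option.ne_none_iff_exists'.1 hr
      have hor : o ≠ r := fun h => hr (h ▸ ho)
      have hallo : ∀ j, j ≠ o → (Csc o j ↔ A o) := by
        intro j hj
        rcases mini5 o p q r j hop hoq hor hqp.symm hrp.symm (fun h => hrq h.symm)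
          with h | h | h | h
        · exact absurd h hj
        · rw [h]; exact csc_symm.trans (h1 o hop ho)
        · rw [h]; exact csc_symm.trans (h2 q o bq hqp hop (fun h => hoq h.symm) hq ho)
        · rw [h]; exact csc_symm.trans (h2 r o br hrp hop (fun h => hor h.symm) hbr ho)
      obtain ⟨⟨j₁, hj₁, hc₁⟩, ⟨j₂, hj₂, hc₂⟩⟩ := mini2 o
      exact hc₂ ((hallo j₂ hj₂).2 ((hallo j₁ hj₁).1 hc₁))

end Cotree
namespace Cotree

variable {V : Type u}

lemma graphPlus_adj_some_some {T : Cotree V} {M : Set V} {y z : V} :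
    (graphPlus T M).Adj (some y) (some z) ↔ y ≠ z ∧ (T.adj y z ∨ T.adj z y) := by
  simp [graphPlus, SimpleGraph.fromRel_adj]

lemma graphPlus_adj_none_some {T : Cotree V} {M : Set V} {z : V} :
    (graphPlus T M).Adj none (some z) ↔ z ∈ M := by
  simp [graphPlus, SimpleGraph.fromRel_adj]

lemma graphPlus_adj_some_none {T : Cotree V} {M : Set V} {z : V} :
    (graphPlus T M).Adj (some z) none ↔ z ∈ M := by
  simp [graphPlus, SimpleGraph.fromRel_adj]

lemma graphPlus_adj_none_none {T : Cotree V} {M : Set V} :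
    ¬ (graphPlus T M).Adj none none := by
  simp [graphPlus, SimpleGraph.fromRel_adj]

lemma adj_or_symm {t : Cotree V} {x y : V} : (t.adj x y ∨ t.adj y x) ↔ t.adj x y :=
  ⟨fun h => h.elim id adj_symm, Or.inl⟩

lemma isCograph_sdiff {T : Cotree V} (hval : T.valid) (hnd : T.leaves.Nodup)
    {N' : Set V} (hle : ∀ v ∈ N', v ∈ T.leaves)
    (hG : IsCograph (graphPlus T N'))
    {b : Bool} {ts : List (Cotree V)}
    (hins : IsInsertionNode T N' (node b ts))
    {c : Cotree V} (hc : c ∈ ts) :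
    IsCograph (graphPlus T (N' \ {v | v ∈ c.leaves})) := by
  classical
  obtain ⟨huT, humix, hunif, hiff⟩ := hins
  rintro ⟨f, hinj, hadj⟩
  have hund : (node b ts).leaves.Nodup := nodup_leaves_of_mem_subtrees hnd huT
  have hCsub : ∀ v ∈ c.leaves, v ∈ (node b ts).leaves :=
    fun v hv => mem_leaves_node.2 ⟨c, hc, hv⟩
  have hNsub : ∀ v, v ∈ N' \ {v | v ∈ c.leaves} → v ∈ N' := fun v hv => hv.1
  obtain ⟨v₀, -⟩ := leaves_ne_nil hval
  by_cases hnone : ∃ p, f p = none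
  case neg =>
    push_neg at hnone
    refine hG ⟨f, hinj, fun i j => Iff.trans ?_ (hadj i j)⟩
    obtain ⟨yi, hyi⟩ := Option.ne_none_iff_exists'.1 (hnone i)
    obtain ⟨yj, hyj⟩ := Option.ne_none_iff_exists'.1 (hnone j)
    rw [hyi, hyj, graphPlus_adj_some_some, graphPlus_adj_some_some]
  case pos =>
  obtain ⟨p, hp⟩ := hnone
  set z : Fin 4 → V := fun i => (f i).getD v₀ with hzdef
  have hz : ∀ i, i ≠ p → f i = some (z i) := by
    intro i hip
    cases hfi : f i with
    | none => exact absurd (hinj (hfi.trans hp.symm)) hip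
    | some v => rw [hzdef]; simp only [hfi]; rfl
  have hzne : ∀ i j, i ≠ p → j ≠ p → i ≠ j → z i ≠ z j := by
    intro i j hip hjp hij h
    exact hij (hinj ((hz i hip).trans (h ▸ (hz j hjp).symm)))
  have hzT : ∀ i, i ≠ p → z i ∈ T.leaves := by
    intro i hip
    obtain ⟨⟨j, hji, hcj⟩, -⟩ := mini2 i
    have hA : (graphPlus T (N' \ {v | v ∈ c.leaves})).Adj (f i) (f j) := (hadj i j).2 hcj
    by_cases hjp : j = p
    · rw [hz i hip, hjp, hp, graphPlus_adj_some_none] at hA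
      exact hle _ (hNsub _ hA)
    · rw [hz i hip, hz j hjp, graphPlus_adj_some_some] at hA
      rcases hA.2 with h | h
      · exact (mem_leaves_of_adj h).1
      · exact (mem_leaves_of_adj h).2
  by_cases hin : ∃ i, i ≠ p ∧ z i ∈ (node b ts).leaves
  case neg =>
    push_neg at hin
    refine hG ⟨f, hinj, fun i j => Iff.trans ?_ (hadj i j)⟩
    by_cases hip : i = p
    · by_cases hjp : j = p
      · rw [hip, hjp, hp]
        exact iff_of_false graphPlus_adj_none_none graphPlus_adj_none_none
      · rw [hip, hp, hz j hjp, graphPlus_adj_none_some, graphPlus_adj_none_some]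
        exact ⟨fun h => ⟨h, fun hc' => hin j hjp (hCsub _ hc')⟩, fun h => h.1⟩
    · by_cases hjp : j = p
      · rw [hjp, hp, hz i hip, graphPlus_adj_some_none, graphPlus_adj_some_none]
        exact ⟨fun h => ⟨h, fun hc' => hin i hip (hCsub _ hc')⟩, fun h => h.1⟩
      · rw [hz i hip, hz j hjp, graphPlus_adj_some_some, graphPlus_adj_some_some]
  case pos =>
  -- set up the classification function and apply `fin4_aux`
  let cl : Fin 4 → Option (Cotree V) := fun i =>
    if h : i ≠ p ∧ z i ∈ (node b ts).leaves then some (mem_leaves_node.1 h.2).choose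
    else none
  have hcl_spec : ∀ i t, cl i = some t → i ≠ p ∧ t ∈ ts ∧ z i ∈ t.leaves := by
    intro i t h
    by_cases hcond : i ≠ p ∧ z i ∈ (node b ts).leaves
    · obtain ⟨ht, hzt⟩ := (mem_leaves_node.1 hcond.2).choose_spec
      rw [show cl i = some (mem_leaves_node.1 hcond.2).choose from dif_pos hcond] at h
      exact ⟨hcond.1, Option.some_injective _ h ▸ ⟨ht, hzt⟩⟩
    · rw [show cl i = none from dif_neg hcond] at h
      exact absurd h (by simp)
  have hcl_none : ∀ i, i ≠ p → cl i = none → z i ∉ (node b ts).leaves := by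
    intro i hip h hmem
    rw [show cl i = some (mem_leaves_node.1 (⟨hip, hmem⟩ : _ ∧ _).2).choose
      from dif_pos ⟨hip, hmem⟩] at h
    exact absurd h (by simp)
  have hcl_some : ∀ i, i ≠ p → z i ∈ (node b ts).leaves → ∃ t, cl i = some t := by
    intro i hip hmem
    exact ⟨_, dif_pos ⟨hip, hmem⟩⟩
  -- the key adjacency translation: x to vertex, via N''
  have hxadj : ∀ i, i ≠ p → (Csc p i ↔ (z i ∈ N' ∧ z i ∉ c.leaves)) := by
    intro i hip
    rw [show Csc p i ↔ (graphPlus T (N' \ {v | v ∈ c.leaves})).Adj (f p) (f i) from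
      (hadj p i).symm, hp, hz i hip, graphPlus_adj_none_some]
    exact Iff.rfl
  refine fin4_aux p cl (fun i => z i ∈ N')
    (fun t => (¬ hollow N' t) ∧ t ≠ c) (b = true) ?h1 ?h2 ?h3 ?h4 ?h5
  case h1 =>
    intro i hip hclnone
    have hout : z i ∉ (node b ts).leaves := hcl_none i hip hclnone
    rw [hxadj i hip]
    exact ⟨fun h => h.1, fun h => ⟨h, fun hc' => hout (hCsub _ hc')⟩⟩
  case h2 =>
    intro i j t hip hjp hij hclt hclnone
    obtain ⟨-, hts, hzt⟩ := hcl_spec i t hclt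
    have hzin : z i ∈ (node b ts).leaves := mem_leaves_node.2 ⟨t, hts, hzt⟩
    have hout : z j ∉ (node b ts).leaves := hcl_none j hjp hclnone
    rw [show Csc i j ↔ (graphPlus T (N' \ {v | v ∈ c.leaves})).Adj (f i) (f j) from
      (hadj i j).symm, hz i hip, hz j hjp, graphPlus_adj_some_some, adj_or_symm]
    rw [adj_iff_lca_series hval hnd huT hzin (hzT j hjp) hout]
    rw [← hiff (z j) (hzT j hjp) hout]
    exact ⟨fun h => h.2, fun h => ⟨hzne i j hip hjp hij, h⟩⟩
  case h3 =>
    intro i t hip hclt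
    obtain ⟨-, hts, hzt⟩ := hcl_spec i t hclt
    rw [hxadj i hip]
    constructor
    · rintro ⟨hN, hnc⟩
      refine ⟨fun hh => hh (z i) hzt hN, fun he => hnc (he ▸ hzt)⟩
    · rintro ⟨hnh, hne⟩
      constructor
      · rcases hunif t hts with hfull | hholl
        · exact hfull (z i) hzt
        · exact absurd hholl hnh
      · intro hc'
        exact hne (sibling_eq hund hts hc hzt hc')
  case h4 =>
    intro i j ti tj hip hjp hij hcli hclj htij
    obtain ⟨-, hti, hzi⟩ := hcl_spec i ti hcli
    obtain ⟨-, htj, hzj⟩ := hcl_spec j tj hclj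
    have hzi' : z i ∈ (node b ts).leaves := mem_leaves_node.2 ⟨ti, hti, hzi⟩
    have hzj' : z j ∈ (node b ts).leaves := mem_leaves_node.2 ⟨tj, htj, hzj⟩
    rw [show Csc i j ↔ (graphPlus T (N' \ {v | v ∈ c.leaves})).Adj (f i) (f j) from
      (hadj i j).symm, hz i hip, hz j hjp, graphPlus_adj_some_some, adj_or_symm]
    rw [adj_restrict hnd huT hzi' hzj', adj_cross hund hti htj htij hzi hzj]
    exact ⟨fun h => h.2, fun h => ⟨hzne i j hip hjp hij, h⟩⟩
  case h5 =>
    obtain ⟨i, hip, hmem⟩ := hin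
    obtain ⟨t, ht⟩ := hcl_some i hip hmem
    exact ⟨i, t, hip, ht⟩

end Cotree
theorem stmt_10 {V : Type u} (T : Cotree V) (Nx : Set V)
    (hval : T.valid) (hnd : T.leaves.Nodup)
    (hNx : ∀ v ∈ Nx, v ∈ T.leaves) (hmix : Cotree.mixed Nx T)
    (u : Cotree V) (hcm : Cotree.IsCMInsertionNode T Nx u) :
    ∀ N' : Set V,
      (Cotree.IsMinimalConstrainedCompletion T Nx N' ∧ Cotree.IsInsertionNode T N' u) ↔
        N' = Cotree.anchored T u Nx := by
  classical
  intro N'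
  obtain ⟨N₀, hmin₀, hins₀⟩ := hcm
  obtain ⟨b, ts, rfl⟩ : ∃ b ts, u = Cotree.node b ts := by
    cases u with
    | leaf v =>
      exfalso
      refine hins₀.2.1 ?_
      by_cases hv : v ∈ N₀
      · exact Or.inl (fun w hw => by
          simp only [Cotree.leaves_leaf, List.mem_singleton] at hw; exact hw ▸ hv)
      · exact Or.inr (fun w hw => by
          simp only [Cotree.leaves_leaf, List.mem_singleton] at hw; exact hw ▸ hv)
    | node b ts => exact ⟨b, ts, rfl⟩
  have hkey : ∀ M, Cotree.IsMinimalConstrainedCompletion T Nx M →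
      Cotree.IsInsertionNode T M (Cotree.node b ts) →
      M = Cotree.anchored T (Cotree.node b ts) Nx := by
    rintro M ⟨⟨hsub, hlea, hcog⟩, hminimal⟩ hins
    obtain ⟨huT, humix, hunif, hiff⟩ := hins
    refine Set.Subset.antisymm ?_ ?_
    · -- M ⊆ anchored
      intro y hyM
      have hyT := hlea y hyM
      by_cases hyu : y ∈ (Cotree.node b ts).leaves
      · obtain ⟨c₀, hc₀, hyc₀⟩ := Cotree.mem_leaves_node.1 hyu
        by_cases hnh : Cotree.hollow Nx c₀
        · exfalso
          have hcc : Cotree.IsConstrainedCompletion T Nx (M \ {v | v ∈ c₀.leaves}) := by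
            refine ⟨?_, fun v hv => hlea v hv.1,
              Cotree.isCograph_sdiff hval hnd hlea hcog ⟨huT, humix, hunif, hiff⟩ hc₀⟩
            intro v hv
            exact ⟨hsub hv, fun hvc => hnh v hvc hv⟩
          have heq := hminimal _ (fun v hv => hv.1) hcc
          have : y ∈ M \ {v | v ∈ c₀.leaves} := by rw [heq]; exact hyM
          exact this.2 hyc₀
        · exact Or.inr ⟨c₀, hc₀, hnh, hyc₀⟩
      · exact Or.inl (Or.inr ⟨hyT, hyu, (hiff y hyT hyu).1 hyM⟩)
    · -- anchored ⊆ M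
      rintro y ((hy | hy) | hy)
      · exact hsub hy
      · exact (hiff y hy.1 hy.2.1).2 hy.2.2
      · obtain ⟨c, hc, hnh, hyc⟩ := hy
        have : ∃ v ∈ c.leaves, v ∈ Nx := by
          by_contra h
          push_neg at h
          exact hnh h
        obtain ⟨w, hwc, hwNx⟩ := this
        rcases hunif c hc with hfull | hholl
        · exact hfull y hyc
        · exact absurd (hholl w hwc) (fun h => h (hsub hwNx))
  constructor
  · rintro ⟨hm, hi⟩
    exact hkey N' hm hi
  · rintro rfl
    have h0 := hkey N₀ hmin₀ hins₀
    rw [← h0]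
    exact ⟨hmin₀, hins₀⟩
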